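/- For an odd prime power q, the Paley graph P(q²) is isomorphic to the block graph of an orthogonal array OA((q+1)/2, q). -/

import Mathlib

/-- An orthogonal array `OA(m, n)`: an `m × n²` array with entries from an `n`-element
set such that for any two distinct rows, the columns restricted to those two rows give
all `n²` ordered pairs. -/
def IsOA (m n : ℕ) (A : Fin m → Fin (n ^ 2) → Fin n) : Prop :=
  ∀ r s : Fin m, r ≠ s → Function.Bijective (fun c => (A r c, A s c))

/-- The block graph of an `m × n²` array: vertices are the columns, two distinct
columns being adjacent when they agree in some row. -/
def blockGraph {m n : ℕ} (A : Fin m → Fin (n ^ 2) → Fin n) : SimpleGraph (Fin (n ^ 2)) where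
  Adj c d := c ≠ d ∧ ∃ r, A r c = A r d
  symm := ⟨fun c d ⟨h, r, hr⟩ => ⟨h.symm, r, hr.symm⟩⟩
  loopless := ⟨fun c ⟨h, _⟩ => h rfl⟩

instance {m n : ℕ} (A : Fin m → Fin (n ^ 2) → Fin n) : DecidableRel (blockGraph A).Adj :=
  fun c d => inferInstanceAs (Decidable (c ≠ d ∧ ∃ r, A r c = A r d))

/-- For an odd prime power `q`, the Paley graph `P(q²)` is isomorphic to the block graph
of an orthogonal array `OA((q+1)/2, q)`. -/
theorem paley_iso_blockGraph (q : ℕ) (hq : IsPrimePow q) (hodd : Odd q)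
    (F : Type*) [Field F] [Fintype F] [DecidableEq F] (hF : Fintype.card F = q ^ 2)
    (G : SimpleGraph F) [DecidableRel G.Adj]
    (hG : ∀ x y : F, G.Adj x y ↔ x ≠ y ∧ IsSquare (x - y)) :
    ∃ A : Fin ((q + 1) / 2) → Fin (q ^ 2) → Fin q,
      IsOA ((q + 1) / 2) q A ∧ Nonempty (G ≃g blockGraph A) := by
  classical
  -- basic arithmetic facts
  obtain ⟨c, hc⟩ := hodd
  have hq2le : 2 ≤ q := hq.two_le
  have hc1 : 1 ≤ c := by omega
  have hQ : q ^ 2 = 4 * (c ^ 2 + c) + 1 := by rw [hc]; ring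
  obtain ⟨e, he⟩ : ∃ e, c ^ 2 + c = e := ⟨_, rfl⟩
  rw [he] at hQ
  have hcc : c * (c + 1) = e := by rw [← he]; ring
  have hq1 : q - 1 = 2 * c := by omega
  have hm : (q + 1) / 2 = c + 1 := by omega
  have hM : q ^ 2 / 2 = 2 * e := by rw [hQ]; omega
  have hN : q ^ 2 - 1 = 4 * e := by rw [hQ]; omega
  have he1 : 1 ≤ e := by nlinarith
  have hq0 : q ≠ 0 := by omega
  have hq1pos : 0 < q - 1 := by omega
  -- characteristic facts
  have hchar : ringChar F ≠ 2 ∧ ∀ x y : F, (x + y) ^ q = x ^ q + y ^ q := by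
    obtain ⟨p, k, hp, hk, hpk⟩ := hq
    have hp' : p.Prime := Nat.prime_iff.mpr hp
    have hpodd : p ≠ 2 := by
      rintro rfl
      have hev : Even q := by
        rw [← hpk]; exact (Nat.even_pow).mpr ⟨even_two, by omega⟩
      rw [Nat.even_iff] at hev; omega
    have hring : ringChar F = p := by
      obtain ⟨n, hrp, hcard⟩ := FiniteField.card F (ringChar F)
      have hq2k : (ringChar F) ^ (n : ℕ) = p ^ (2 * k) := by
        rw [← hcard, hF, ← hpk]; ring
      have hdvd : ringChar F ∣ p ^ (2 * k) := by
        rw [← hq2k]; exact dvd_pow_self _ (by exact_mod_cast n.pos.ne')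
      exact (Nat.prime_dvd_prime_iff_eq hrp hp').mp (hrp.dvd_of_dvd_pow hdvd)
    refine ⟨by rw [hring]; exact hpodd, ?_⟩
    haveI : Fact p.Prime := ⟨hp'⟩
    haveI : CharP F p := hring ▸ ringChar.charP F
    intro x y
    rw [← hpk]
    exact add_pow_char_pow x y p k
  have hchar2 := hchar.1
  have hfrob := hchar.2
  -- a generator of the unit group
  obtain ⟨g, hg⟩ := IsCyclic.exists_generator (α := Fˣ)
  have hcardU : Nat.card Fˣ = q ^ 2 - 1 := by
    rw [Nat.card_eq_fintype_card, Fintype.card_units (α := F), hF]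
  have horder : orderOf g = q ^ 2 - 1 := by
    rw [orderOf_eq_card_of_forall_mem_zpowers hg, hcardU]
  have hNpos : 0 < q ^ 2 - 1 := by rw [hN]; omega
  have hprod : q ^ 2 - 1 = (q - 1) * (q + 1) := by
    rw [hN, ← hcc, hq1, hc]; ring
  have hprim : IsPrimitiveRoot (g : F) (q ^ 2 - 1) := by
    have h1 : IsPrimitiveRoot g (q ^ 2 - 1) := horder ▸ IsPrimitiveRoot.orderOf g
    exact IsPrimitiveRoot.coe_units_iff.mpr h1
  have hprimK : IsPrimitiveRoot ((g : F) ^ (q + 1)) (q - 1) :=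
    IsPrimitiveRoot.pow hNpos hprim (by rw [hprod]; ring)
  -- the subfield (as a finset) of cardinality q
  set Kset : Finset F := insert (0 : F) (Polynomial.nthRootsFinset (q - 1) (1 : F)) with hKset
  have hpow1 : ∀ x : F, x ≠ 0 → (x ^ q = x ↔ x ^ (q - 1) = 1) := by
    intro x hx
    have hqs : q = (q - 1) + 1 := by omega
    constructor
    · intro h
      rw [hqs, pow_succ] at h
      exact mul_right_cancel₀ hx (h.trans (one_mul x).symm)
    · intro h
      rw [hqs, pow_succ, h, one_mul]
  have hKmem : ∀ x : F, x ∈ Kset ↔ x ^ q = x := by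
    intro x
    rw [hKset, Finset.mem_insert, Polynomial.mem_nthRootsFinset hq1pos (1 : F)]
    constructor
    · rintro (rfl | h)
      · simp [zero_pow hq0]
      · by_cases hx : x = 0
        · subst hx; simp [zero_pow hq0]
        · exact (hpow1 x hx).mpr h
    · intro h
      by_cases hx : x = 0
      · exact Or.inl hx
      · exact Or.inr ((hpow1 x hx).mp h)
  have hKcard : Kset.card = q := by
    rw [hKset, Finset.card_insert_of_notMem, hprimK.card_nthRootsFinset]
    · omega
    · intro h0
      have h1 := (Polynomial.mem_nthRootsFinset hq1pos (1 : F)).mp h0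
      rw [zero_pow (by omega : q - 1 ≠ 0)] at h1
      exact zero_ne_one h1
  -- the slopes
  set sU : Fin ((q + 1) / 2) → Fˣ := fun r => g ^ (2 * (r : ℕ)) with hsU
  have hsUval : ∀ (r : Fin ((q + 1) / 2)) (n : ℕ),
      ((sU r : F)) ^ n = ((g ^ (2 * (r : ℕ) * n) : Fˣ) : F) := by
    intro r n
    simp only [hsU]
    rw [← Units.val_pow_eq_pow_val, ← pow_mul]
  -- the lines through the origin with the given slopes
  let L : Fin ((q + 1) / 2) → AddSubgroup F := fun r =>
    { carrier := {y : F | (y * (↑(sU r))⁻¹) ^ q = y * (↑(sU r))⁻¹}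
      add_mem' := by
        intro x y hx hy
        simp only [Set.mem_setOf_eq] at hx hy ⊢
        rw [add_mul, hfrob, hx, hy]
      zero_mem' := by
        simp only [Set.mem_setOf_eq, zero_mul, zero_pow hq0]
      neg_mem' := by
        intro x hx
        simp only [Set.mem_setOf_eq] at hx ⊢
        have h := hfrob (x * (↑(sU r))⁻¹) (-(x * (↑(sU r))⁻¹))
        rw [add_neg_cancel, zero_pow hq0, hx] at h
        rw [neg_mul]
        exact eq_neg_of_add_eq_zero_right h.symm }
  have hLmem : ∀ (r) (y : F), y ∈ L r ↔ (y * (↑(sU r))⁻¹) ^ q = y * (↑(sU r))⁻¹ :=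
    fun r y => Iff.rfl
  have hsne : ∀ r, ((sU r : F)) ≠ 0 := fun r => Units.ne_zero _
  have hLr_unit : ∀ (r) (y : F), y ≠ 0 → y ∈ L r → y ^ (q - 1) = ((sU r : F)) ^ (q - 1) := by
    intro r y hy hmem
    rw [hLmem] at hmem
    have hz : y * (↑(sU r))⁻¹ ≠ 0 := mul_ne_zero hy (inv_ne_zero (hsne r))
    have h1 : (y * (↑(sU r))⁻¹) ^ (q - 1) = 1 := (hpow1 _ hz).mp hmem
    rw [mul_pow, inv_pow] at h1
    exact (mul_inv_eq_one₀ (pow_ne_zero _ (hsne r))).mp h1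
  have hLr_of : ∀ (r) (y : F), y ^ (q - 1) = ((sU r : F)) ^ (q - 1) → y ∈ L r := by
    intro r y h
    rw [hLmem]
    by_cases hy : y = 0
    · subst hy
      rw [zero_pow (by omega : q - 1 ≠ 0)] at h
      exact absurd h.symm (pow_ne_zero _ (hsne r))
    · refine (hpow1 _ (mul_ne_zero hy (inv_ne_zero (hsne r)))).mpr ?_
      rw [mul_pow, inv_pow, h, mul_inv_cancel₀ (pow_ne_zero _ (hsne r))]
  -- distinct lines intersect trivially
  have hinj : ∀ i j : ℕ, 2 * i ≤ q - 1 → 2 * j ≤ q - 1 →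
      g ^ (2 * i * (q - 1)) = g ^ (2 * j * (q - 1)) → i = j := by
    have key : ∀ i j : ℕ, i ≤ j → 2 * j ≤ q - 1 →
        g ^ (2 * i * (q - 1)) = g ^ (2 * j * (q - 1)) → i = j := by
      intro i j hij hj h
      have h5 : 2 * i * (q - 1) ≡ 2 * j * (q - 1) [MOD q ^ 2 - 1] := by
        rw [← horder]; exact pow_eq_pow_iff_modEq.mp h
      have hle : 2 * i * (q - 1) ≤ 2 * j * (q - 1) := Nat.mul_le_mul_right _ (by omega)
      have hdvd : (q ^ 2 - 1) ∣ 2 * j * (q - 1) - 2 * i * (q - 1) :=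
        (Nat.modEq_iff_dvd' hle).mp h5
      have heq : 2 * j * (q - 1) - 2 * i * (q - 1) = (2 * j - 2 * i) * (q - 1) :=
        (Nat.sub_mul _ _ _).symm
      rw [heq, hprod] at hdvd
      have hlt : (2 * j - 2 * i) * (q - 1) < (q - 1) * (q + 1) := by
        have h7 : 2 * j - 2 * i < q + 1 := by omega
        calc (2 * j - 2 * i) * (q - 1) = (q - 1) * (2 * j - 2 * i) := Nat.mul_comm _ _
          _ < (q - 1) * (q + 1) := mul_lt_mul_of_pos_left h7 hq1pos
      have h0 := Nat.eq_zero_of_dvd_of_lt hdvd hlt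
      rcases Nat.mul_eq_zero.mp h0 with h8 | h8 <;> omega
    intro i j hi hj h
    rcases le_total i j with hij | hij
    · exact key i j hij hj h
    · exact (key j i hij hi h.symm).symm
  have hdisj : ∀ r t : Fin ((q + 1) / 2), r ≠ t → ∀ y : F, y ∈ L r → y ∈ L t → y = 0 := by
    intro r t hrt y hyr hyt
    by_contra hy
    have h1 := hLr_unit r y hy hyr
    have h2 := hLr_unit t y hy hyt
    have h3 : ((sU r : F)) ^ (q - 1) = ((sU t : F)) ^ (q - 1) := by rw [← h1, ← h2]
    rw [hsUval, hsUval] at h3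
    have h4 : g ^ (2 * (r : ℕ) * (q - 1)) = g ^ (2 * (t : ℕ) * (q - 1)) :=
      Units.ext h3
    have hr2 : 2 * (r : ℕ) ≤ q - 1 := by have := r.is_lt; omega
    have ht2 : 2 * (t : ℕ) ≤ q - 1 := by have := t.is_lt; omega
    exact hrt (Fin.ext (hinj _ _ hr2 ht2 h4))
  -- membership in some line iff square
  have hM1 : q ^ 2 / 2 = (q - 1) * ((q + 1) / 2) := by
    rw [hM, ← hcc, hq1, hm]; ring
  have hLsq : ∀ (r) (y : F), y ≠ 0 → y ∈ L r → y ^ (q ^ 2 / 2) = 1 := by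
    intro r y hy hmem
    have h1 : y ^ (q - 1) = ((sU r : F)) ^ (q - 1) := hLr_unit r y hy hmem
    rw [hM1, pow_mul, h1, ← pow_mul, hsUval]
    have hdvd : (q ^ 2 - 1) ∣ 2 * (r : ℕ) * ((q - 1) * ((q + 1) / 2)) := by
      refine ⟨(r : ℕ), ?_⟩
      obtain ⟨rv, hrv⟩ : ∃ rv, (r : ℕ) = rv := ⟨_, rfl⟩
      rw [hrv, hN, ← hcc, hq1, hm]; ring
    have hg1 : g ^ (2 * (r : ℕ) * ((q - 1) * ((q + 1) / 2))) = 1 :=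
      orderOf_dvd_iff_pow_eq_one.mp (horder ▸ hdvd)
    rw [hg1, Units.val_one]
  have hsqL : ∀ y : F, y ≠ 0 → y ^ (q ^ 2 / 2) = 1 → ∃ r, y ∈ L r := by
    intro y hy hsq
    obtain ⟨n, hn⟩ : ∃ n : ℕ, g ^ n = Units.mk0 y hy := by
      have h := (mem_powers_iff_mem_zpowers (x := g) (y := Units.mk0 y hy)).mpr
        (hg (Units.mk0 y hy))
      exact (Submonoid.mem_powers_iff _ g).mp h
    have hu1 : (Units.mk0 y hy) ^ (q ^ 2 / 2) = 1 := by
      apply Units.ext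
      rw [Units.val_pow_eq_pow_val, Units.val_mk0, Units.val_one]
      exact hsq
    have hdvd : (q ^ 2 - 1) ∣ n * (q ^ 2 / 2) := by
      rw [← horder]
      apply orderOf_dvd_of_pow_eq_one
      rw [pow_mul, hn, hu1]
    have h2 : 2 ∣ n := by
      obtain ⟨d, hd⟩ := hdvd
      rw [hM, hN] at hd
      have hnd : n = 2 * d := by
        apply Nat.eq_of_mul_eq_mul_right (show 0 < 2 * e by omega)
        rw [hd]; ring
      omega
    obtain ⟨i, hi⟩ := h2
    have hmpos : 0 < (q + 1) / 2 := by omega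
    refine ⟨⟨i % ((q + 1) / 2), Nat.mod_lt _ hmpos⟩, ?_⟩
    apply hLr_of
    have hyv : y = ((g ^ n : Fˣ) : F) := by rw [hn, Units.val_mk0]
    rw [hyv, hsUval, ← Units.val_pow_eq_pow_val, ← pow_mul]
    congr 1
    have hval : (((⟨i % ((q + 1) / 2), Nat.mod_lt _ hmpos⟩ : Fin ((q + 1) / 2)) : ℕ)) =
        i % ((q + 1) / 2) := rfl
    rw [hval, pow_eq_pow_iff_modEq, horder]
    have hle : 2 * (i % ((q + 1) / 2)) * (q - 1) ≤ n * (q - 1) := by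
      apply Nat.mul_le_mul_right
      have := Nat.mod_le i ((q + 1) / 2); omega
    refine Nat.ModEq.symm ((Nat.modEq_iff_dvd' hle).mpr ?_)
    obtain ⟨P, hP⟩ : ∃ P, ((q + 1) / 2) * (i / ((q + 1) / 2)) = P := ⟨_, rfl⟩
    have hsplit : i % ((q + 1) / 2) + P = i := by rw [← hP]; exact Nat.mod_add_div i _
    refine ⟨i / ((q + 1) / 2), ?_⟩
    have hfac : n * (q - 1) - 2 * (i % ((q + 1) / 2)) * (q - 1) =
        (n - 2 * (i % ((q + 1) / 2))) * (q - 1) := (Nat.sub_mul _ _ _).symm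
    rw [hfac]
    have hnsub : n - 2 * (i % ((q + 1) / 2)) = 2 * P := by omega
    rw [hnsub, ← hP, hN, hq1, hm, ← hcc]; ring
  -- cardinality of the lines and their quotients
  have hLcard : ∀ r, Nat.card (L r) = q := by
    intro r
    have eqv : Kset ≃ (L r) :=
      { toFun := fun x => ⟨(x : F) * (sU r : F), by
          rw [hLmem, mul_inv_cancel_right₀ (hsne r)]
          exact (hKmem _).mp x.2⟩
        invFun := fun y => ⟨(y : F) * ((sU r : F))⁻¹, by
          rw [hKmem]; exact (hLmem r _).mp y.2⟩
        left_inv := fun x => Subtype.ext (mul_inv_cancel_right₀ (hsne r) _)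
        right_inv := fun y => Subtype.ext (inv_mul_cancel_right₀ (hsne r) _) }
    rw [← Nat.card_congr eqv, Nat.card_eq_finsetCard, hKcard]
  have hq2card : Nat.card F = q ^ 2 := by rw [Nat.card_eq_fintype_card, hF]
  have hQcard : ∀ r, Nat.card (F ⧸ L r) = q := by
    intro r
    have h := AddSubgroup.card_eq_card_quotient_mul_card_addSubgroup (L r)
    rw [hq2card, hLcard r] at h
    have h2 : Nat.card (F ⧸ L r) * q = q * q := by rw [← h, pow_two]
    exact Nat.eq_of_mul_eq_mul_right (by omega) h2
  let eQ : ∀ r, (F ⧸ L r) ≃ Fin q := fun r => Finite.equivFinOfCardEq (hQcard r)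
  let ι : Fin (q ^ 2) ≃ F := (Fintype.equivFinOfCardEq hF).symm
  let A : Fin ((q + 1) / 2) → Fin (q ^ 2) → Fin q := fun r cc =>
    eQ r (QuotientAddGroup.mk (ι cc))
  have hAiff : ∀ (r) (cd d : Fin (q ^ 2)), (A r cd = A r d) ↔ ι cd - ι d ∈ L r := by
    intro r cd d
    constructor
    · intro h
      have h1 : (QuotientAddGroup.mk (ι cd) : F ⧸ L r) = QuotientAddGroup.mk (ι d) :=
        (eQ r).injective h
      have h2 := QuotientAddGroup.eq.mp h1
      have h3 : ι cd - ι d = -(-(ι cd) + ι d) := by ring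
      rw [h3]; exact neg_mem h2
    · intro h
      show eQ r _ = eQ r _
      congr 1
      apply QuotientAddGroup.eq.mpr
      have h3 : -(ι cd) + ι d = -(ι cd - ι d) := by ring
      rw [h3]; exact neg_mem h
  refine ⟨A, ?_, ?_⟩
  · -- the orthogonal array property
    intro r t hrt
    rw [Fintype.bijective_iff_injective_and_card]
    constructor
    · intro cd d h
      rw [Prod.mk.injEq] at h
      have h1 := (hAiff r cd d).mp h.1
      have h2 := (hAiff t cd d).mp h.2
      have h0 : ι cd - ι d = 0 := hdisj r t hrt _ h1 h2
      exact ι.injective (sub_eq_zero.mp h0)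
    · simp [pow_two]
  · -- the graph isomorphism
    have hiso : ∀ a b : F, (blockGraph A).Adj (ι.symm a) (ι.symm b) ↔ G.Adj a b := by
      intro a b
      rw [hG]
      constructor
      · rintro ⟨hne, r, hr⟩
        have hab : a ≠ b := fun h => hne (by rw [h])
        refine ⟨hab, ?_⟩
        have h1 := (hAiff r _ _).mp hr
        rw [Equiv.apply_symm_apply, Equiv.apply_symm_apply] at h1
        have hsub : a - b ≠ 0 := sub_ne_zero.mpr hab
        have h2 := hLsq r _ hsub h1
        rw [FiniteField.isSquare_iff hchar2 hsub, hF]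
        exact h2
      · rintro ⟨hab, hsq⟩
        have hsub : a - b ≠ 0 := sub_ne_zero.mpr hab
        rw [FiniteField.isSquare_iff hchar2 hsub, hF] at hsq
        obtain ⟨r, hr⟩ := hsqL _ hsub hsq
        refine ⟨fun h => hab (ι.symm.injective h), r, ?_⟩
        apply (hAiff r _ _).mpr
        rw [Equiv.apply_symm_apply, Equiv.apply_symm_apply]
        exact hr
    exact ⟨⟨ι.symm, fun {a b} => hiso a b⟩⟩
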